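/- The entry φ_{0,0}(z) is nonzero, and T(F(z)) = α_0(z) + α_0^+ · F_1(z) · α_0^−, where F(z) is the q×p matrix with entries φ_{i,j}(z) (0 ≤ i ≤ q−1, 0 ≤ j ≤ p−1) and F_1(z) is the q×p matrix with entries φ^{(1)}_{i,j}(z) (0 ≤ i ≤ q−1, 0 ≤ j ≤ p−1). Equivalently, F(z) = 𝟏/(α_0(z) + α_0^+ F_1(z) α_0^−). -/

import Mathlib

open scoped BigOperators
open Finset

noncomputable section

/-- The field `ℂ((z⁻¹))`, realized as Laurent series in the variable `t = z⁻¹`. -/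
abbrev LS : Type := LaurentSeries ℂ

/-- The element `z` of `ℂ((z⁻¹))` (i.e. `t⁻¹`). -/
def zLS : LS := HahnSeries.single (-1 : ℤ) (1 : ℂ)

/-- Constant (scalar) Laurent series. -/
def CLS (c : ℂ) : LS := HahnSeries.C c

/-- The generating series `Σ_{n ≥ 0} c n · z^{-n-1}` in `ℂ((z⁻¹))`. -/
def gen (c : ℕ → ℂ) : LS :=
  HahnSeries.single (1 : ℤ) (1 : ℂ) * (HahnSeries.ofPowerSeries ℤ ℂ) (PowerSeries.mk c)

/-- Weight of a step of displacement `s` starting at height `h`: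
`a_h^{(s)}` if `s ≥ 0`, and `a_{h+s}^{(s)}` if `s < 0`.  (Here `a k n = aₙ⁽ᵏ⁾`.) -/
def stepW (a : ℤ → ℤ → ℂ) (h s : ℤ) : ℂ := if 0 ≤ s then a s h else a s (h + s)

/-- Extend a finite step sequence by zero. -/
def ext {n : ℕ} (s : Fin n → ℤ) : ℕ → ℤ := fun t => if h : t < n then s ⟨t, h⟩ else 0

/-- Height after `k` steps, starting at height `i`. -/
def hgt (i : ℤ) (σ : ℕ → ℤ) (k : ℕ) : ℤ := i + ∑ t ∈ Finset.range k, σ t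

/-- Weight of the lattice path of length `n` starting at height `i` with steps `σ`. -/
def wgt (a : ℤ → ℤ → ℂ) (n : ℕ) (i : ℤ) (σ : ℕ → ℤ) : ℂ :=
  ∏ k ∈ Finset.range n, stepW a (hgt i σ k) (σ k)

/-- All admissible step sequences of length `n` (each step in `[-p, q]`). -/
def steps (p q n : ℕ) : Finset (Fin n → ℤ) :=
  Fintype.piFinset fun _ => Finset.Icc (-(p : ℤ)) (q : ℤ)

/-- `A_{[n,i,j]}`: weight polynomial of paths of length `n` from `(0,i)` to `(n,j)`
staying at height `≥ 0`. -/
def Apoly (p q : ℕ) (a : ℤ → ℤ → ℂ) (n : ℕ) (i j : ℤ) : ℂ :=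
  ∑ s ∈ steps p q n,
    if hgt i (ext s) n = j ∧ ∀ k ≤ n, 0 ≤ hgt i (ext s) k then wgt a n i (ext s) else 0

/-- `W_{[n,i,j]}`: weight polynomial of unrestricted paths of length `n` from `(0,i)` to `(n,j)`. -/
def Wpoly (p q : ℕ) (a : ℤ → ℤ → ℂ) (n : ℕ) (i j : ℤ) : ℂ :=
  ∑ s ∈ steps p q n, if hgt i (ext s) n = j then wgt a n i (ext s) else 0

/-- `V_{[n,i,j]}`: weight polynomial of paths of length `n` from `(0,i)` to `(n,j)`
staying at height `≤ -1`. -/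
def Vpoly (p q : ℕ) (a : ℤ → ℤ → ℂ) (n : ℕ) (i j : ℤ) : ℂ :=
  ∑ s ∈ steps p q n,
    if hgt i (ext s) n = j ∧ ∀ k ≤ n, hgt i (ext s) k ≤ -1 then wgt a n i (ext s) else 0

/-- `A_{[ℓ,i,j,N]}`: weight polynomial of paths of length `ℓ` from `(0,i)` to `(ℓ,j)`
with all heights in `{0, …, N-1}`. -/
def Aboxpoly (p q : ℕ) (a : ℤ → ℤ → ℂ) (N ℓ : ℕ) (i j : ℤ) : ℂ :=
  ∑ s ∈ steps p q ℓ,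
    if hgt i (ext s) ℓ = j ∧ ∀ k ≤ ℓ, 0 ≤ hgt i (ext s) k ∧ hgt i (ext s) k ≤ (N : ℤ) - 1
    then wgt a ℓ i (ext s) else 0

/-- The generating series `A_{i,j}(z)`. -/
def Aser (p q : ℕ) (a : ℤ → ℤ → ℂ) (i j : ℤ) : LS := gen fun n => Apoly p q a n i j

/-- The generating series `W_{i,j}(z)`. -/
def Wser (p q : ℕ) (a : ℤ → ℤ → ℂ) (i j : ℤ) : LS := gen fun n => Wpoly p q a n i j

/-- The generating series `V_{i,j}(z)`. -/
def Vser (p q : ℕ) (a : ℤ → ℤ → ℂ) (i j : ℤ) : LS := gen fun n => Vpoly p q a n i j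


/-- The one-sided banded matrix `H`: `h_{i,j} = a_{min(i,j)}^{(j-i)}` when `-p ≤ j-i ≤ q`. -/
def Hmat (p q : ℕ) (a : ℤ → ℤ → ℂ) (i j : ℕ) : ℂ :=
  if -(p : ℤ) ≤ (j : ℤ) - (i : ℤ) ∧ (j : ℤ) - (i : ℤ) ≤ (q : ℤ) then
    a ((j : ℤ) - (i : ℤ)) (min (i : ℤ) (j : ℤ)) else 0

/-- Entrywise power of a one-sided matrix whose rows are supported on `[0, i + B]`:
`(M^n)_{i,j}`. -/
def onePow (M : ℕ → ℕ → ℂ) (B : ℕ) : ℕ → ℕ → ℕ → ℂ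
  | 0, i, j => if i = j then 1 else 0
  | n + 1, i, j => ∑ r ∈ Finset.range (i + B + 1), M i r * onePow M B n r j

/-- The transformation `T` on `q × p` matrices (over a field) with nonzero `(0,0)` entry. -/
def Tmat {F : Type*} [Field F] {q p : ℕ} (hq : 0 < q) (hp : 0 < p)
    (A : Matrix (Fin q) (Fin p) F) : Matrix (Fin q) (Fin p) F := fun i j =>
  if hi : (i : ℕ) + 1 < q then
    if hj : (j : ℕ) + 1 < p then
      (A ⟨(i : ℕ) + 1, hi⟩ ⟨(j : ℕ) + 1, hj⟩ * A ⟨0, hq⟩ ⟨0, hp⟩ -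
          A ⟨0, hq⟩ ⟨(j : ℕ) + 1, hj⟩ * A ⟨(i : ℕ) + 1, hi⟩ ⟨0, hp⟩) / A ⟨0, hq⟩ ⟨0, hp⟩
    else A ⟨(i : ℕ) + 1, hi⟩ ⟨0, hp⟩ / A ⟨0, hq⟩ ⟨0, hp⟩
  else
    if hj : (j : ℕ) + 1 < p then -A ⟨0, hq⟩ ⟨(j : ℕ) + 1, hj⟩ / A ⟨0, hq⟩ ⟨0, hp⟩
    else 1 / A ⟨0, hq⟩ ⟨0, hp⟩

/-- The inverse transformation `T⁻¹` on `q × p` matrices with nonzero `(q-1,p-1)` entry. -/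
def Tinv {F : Type*} [Field F] {q p : ℕ} (hq : 0 < q) (hp : 0 < p)
    (B : Matrix (Fin q) (Fin p) F) : Matrix (Fin q) (Fin p) F := fun i j =>
  if hi : (i : ℕ) = 0 then
    if hj : (j : ℕ) = 0 then
      1 / B ⟨q - 1, Nat.sub_lt hq one_pos⟩ ⟨p - 1, Nat.sub_lt hp one_pos⟩
    else
      -B ⟨q - 1, Nat.sub_lt hq one_pos⟩ ⟨(j : ℕ) - 1, by have := j.isLt; omega⟩ /
        B ⟨q - 1, Nat.sub_lt hq one_pos⟩ ⟨p - 1, Nat.sub_lt hp one_pos⟩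
  else
    if hj : (j : ℕ) = 0 then
      B ⟨(i : ℕ) - 1, by have := i.isLt; omega⟩ ⟨p - 1, Nat.sub_lt hp one_pos⟩ /
        B ⟨q - 1, Nat.sub_lt hq one_pos⟩ ⟨p - 1, Nat.sub_lt hp one_pos⟩
    else
      (B ⟨(i : ℕ) - 1, by have := i.isLt; omega⟩ ⟨(j : ℕ) - 1, by have := j.isLt; omega⟩ *
          B ⟨q - 1, Nat.sub_lt hq one_pos⟩ ⟨p - 1, Nat.sub_lt hp one_pos⟩ -
        B ⟨(i : ℕ) - 1, by have := i.isLt; omega⟩ ⟨p - 1, Nat.sub_lt hp one_pos⟩ *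
          B ⟨q - 1, Nat.sub_lt hq one_pos⟩ ⟨(j : ℕ) - 1, by have := j.isLt; omega⟩) /
        B ⟨q - 1, Nat.sub_lt hq one_pos⟩ ⟨p - 1, Nat.sub_lt hp one_pos⟩

/-- `chainFrom τ k X m = τ_m (τ_{m+1} ( ⋯ (τ_{k-1} X)))`; in particular
`chainFrom τ k X 0 = (τ_0 ∘ τ_1 ∘ ⋯ ∘ τ_{k-1}) X`. -/
def chainFrom {M : Type*} (τ : ℕ → M → M) (k : ℕ) (X : M) (m : ℕ) : M :=
  (List.range (k - m)).foldr (fun t Y => τ (m + t) Y) X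

/-- The `q × p` matrix `α_k(z)`, whose only nonzero entry is `z - a_k^{(0)}` at `(q-1, p-1)`. -/
def alphaZ (q p : ℕ) (a : ℤ → ℤ → ℂ) (k : ℕ) : Matrix (Fin q) (Fin p) LS := fun i j =>
  if (i : ℕ) = q - 1 ∧ (j : ℕ) = p - 1 then zLS - CLS (a 0 (k : ℤ)) else 0

/-- The `q × q` matrix `α_k⁺`: first `q-1` rows of the identity, last row
`(-a_k^{(1)}, …, -a_k^{(q)})`. -/
def alphaP (q : ℕ) (a : ℤ → ℤ → ℂ) (k : ℕ) : Matrix (Fin q) (Fin q) LS := fun i j =>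
  if (i : ℕ) = q - 1 then -CLS (a (((j : ℕ) : ℤ) + 1) (k : ℤ))
  else if i = j then 1 else 0

/-- The `p × p` matrix `α_k⁻`: first `p-1` columns of the identity, last column
`(a_k^{(-1)}, …, a_k^{(-p)})ᵀ`. -/
def alphaM (p : ℕ) (a : ℤ → ℤ → ℂ) (k : ℕ) : Matrix (Fin p) (Fin p) LS := fun i j =>
  if (j : ℕ) = p - 1 then CLS (a (-(((i : ℕ) : ℤ) + 1)) (k : ℤ))
  else if i = j then 1 else 0

/-- `F_r(z)`: the `q × p` matrix of resolvent series of `H^{[r]}` (delete the first `r` rows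
and columns of `H`); `F_0 = F`. -/
def Fmat (p q : ℕ) (a : ℤ → ℤ → ℂ) (r : ℕ) : Matrix (Fin q) (Fin p) LS := fun i j =>
  gen fun n => onePow (fun i' j' => Hmat p q a (i' + r) (j' + r)) q n (i : ℕ) (j : ℕ)

/-- The transformation `τ_{α,k}(X) = T⁻¹(α_k(z) + α_k⁺ X α_k⁻)`. -/
def tauAlpha (p q : ℕ) (hq : 0 < q) (hp : 0 < p) (a : ℤ → ℤ → ℂ) (k : ℕ)
    (X : Matrix (Fin q) (Fin p) LS) : Matrix (Fin q) (Fin p) LS :=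
  Tinv hq hp (alphaZ q p a k + alphaP q a k * X * alphaM p a k)

def Xmk (c : ℕ → ℂ) : PowerSeries ℂ := PowerSeries.X * PowerSeries.mk c

lemma coeff_Xmk (c : ℕ → ℂ) (n : ℕ) :
    PowerSeries.coeff n (Xmk c) = if n = 0 then 0 else c (n - 1) := by
  cases n with
  | zero => simp [Xmk, PowerSeries.coeff_zero_eq_constantCoeff]
  | succ m => simp [Xmk, PowerSeries.coeff_succ_X_mul, PowerSeries.coeff_mk]

lemma gen_eq (c : ℕ → ℂ) : gen c = (HahnSeries.ofPowerSeries ℤ ℂ) (Xmk c) := by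
  rw [Xmk, map_mul, HahnSeries.ofPowerSeries_X, gen]

lemma gen_add (c d : ℕ → ℂ) : gen (fun n => c n + d n) = gen c + gen d := by
  rw [gen_eq, gen_eq, gen_eq, ← map_add]
  congr 1
  ext n
  simp only [coeff_Xmk, map_add]
  split <;> simp

lemma gen_zero : gen (fun _ => 0) = 0 := by
  rw [gen_eq]
  have : Xmk (fun _ => (0:ℂ)) = 0 := by ext n; simp [coeff_Xmk]
  rw [this, map_zero]

lemma gen_inj {c d : ℕ → ℂ} (h : gen c = gen d) : ∀ n, c n = d n := by
  rw [gen_eq, gen_eq] at h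
  have h2 := HahnSeries.ofPowerSeries_injective h
  intro n
  have := congrArg (PowerSeries.coeff (n+1)) h2
  simpa [coeff_Xmk] using this

lemma CLS_mul_gen (k : ℂ) (c : ℕ → ℂ) : CLS k * gen c = gen (fun n => k * c n) := by
  rw [gen_eq, gen_eq, CLS, ← HahnSeries.ofPowerSeries_C, ← map_mul]
  congr 1
  ext n
  rw [PowerSeries.coeff_C_mul]
  simp only [coeff_Xmk]
  split <;> simp

lemma gen_mul (c d : ℕ → ℂ) : gen c * gen d = gen (fun n => ∑ m ∈ range n, c m * d (n - 1 - m)) := by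
  rw [gen_eq, gen_eq, gen_eq, ← map_mul]
  congr 1
  ext n
  rw [PowerSeries.coeff_mul]
  simp only [coeff_Xmk]
  cases n with
  | zero => simp
  | succ N =>
    rw [Finset.Nat.sum_antidiagonal_eq_sum_range_succ_mk]
    simp only [Nat.succ_sub_succ]
    rw [Finset.sum_range_succ']
    simp only [if_neg (Nat.succ_ne_zero _), if_pos rfl, mul_zero, add_zero]
    simp only [if_true, zero_mul, mul_zero, add_zero, Nat.succ_sub_succ]
    rw [Finset.sum_range_succ, Nat.sub_self, if_pos rfl, mul_zero, add_zero, Nat.sub_zero]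
    refine Finset.sum_congr rfl fun x hx => ?_
    rw [Finset.mem_range] at hx
    rw [if_neg (by omega), Nat.sub_zero]
    have h2 : N - x - 1 = N - 1 - x := by omega
    rw [h2]

lemma zLS_mul_gen (c : ℕ → ℂ) : zLS * gen c = CLS (c 0) + gen (fun n => c (n+1)) := by
  rw [gen, zLS, ← mul_assoc, HahnSeries.single_mul_single]
  norm_num
  rw [gen_eq, CLS, ← HahnSeries.ofPowerSeries_C, ← map_add]
  congr 1
  ext n
  simp only [map_add, coeff_Xmk, PowerSeries.coeff_C, PowerSeries.coeff_mk]
  cases n with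
  | zero => simp
  | succ m => simp

section Comb

variable (p q : ℕ) (a : ℤ → ℤ → ℂ)

lemma onePow_zero (M : ℕ → ℕ → ℂ) (B i j : ℕ) : onePow M B 0 i j = if i = j then 1 else 0 := rfl
lemma onePow_succ (M : ℕ → ℕ → ℂ) (B n i j : ℕ) :
    onePow M B (n+1) i j = ∑ r ∈ Finset.range (i + B + 1), M i r * onePow M B n r j := rfl

variable (M : ℕ → ℕ → ℂ) (hhi : ∀ i j, i + q < j → M i j = 0) (hlo : ∀ i j, j + p < i → M i j = 0)

include hhi hlo in
lemma onePow_right : ∀ n i j, onePow M q (n+1) i j = ∑ r ∈ range (j + p + 1), onePow M q n i r * M r j := by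
  intro n
  induction n with
  | zero =>
    intro i j
    rw [onePow_succ]
    simp only [onePow_zero, mul_ite, mul_one, mul_zero, ite_mul, one_mul, zero_mul]
    rw [Finset.sum_ite_eq' (range (i+q+1)) j (fun r => M i r),
        Finset.sum_ite_eq (range (j+p+1)) i (fun r => M r j)]
    simp only [Finset.mem_range]
    by_cases h1 : j < i + q + 1
    · by_cases h2 : i < j + p + 1
      · rw [if_pos h1, if_pos h2]
      · rw [if_pos h1, if_neg h2, hlo i j (by omega)]
    · by_cases h2 : i < j + p + 1
      · rw [if_neg h1, if_pos h2, hhi i j (by omega)]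
      · rw [if_neg h1, if_neg h2]
  | succ n ih =>
    intro i j
    rw [onePow_succ]
    calc ∑ r ∈ range (i + q + 1), M i r * onePow M q (n+1) r j
        = ∑ r ∈ range (i + q + 1), ∑ s ∈ range (j + p + 1), M i r * (onePow M q n r s * M s j) := by
          refine Finset.sum_congr rfl fun r _ => ?_
          rw [ih r j, Finset.mul_sum]
      _ = ∑ s ∈ range (j + p + 1), (∑ r ∈ range (i + q + 1), M i r * onePow M q n r s) * M s j := by
          rw [Finset.sum_comm]
          refine Finset.sum_congr rfl fun s _ => ?_
          rw [Finset.sum_mul]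
          refine Finset.sum_congr rfl fun r _ => ?_
          ring
      _ = ∑ r ∈ range (j + p + 1), onePow M q (n+1) i r * M r j := by
          refine Finset.sum_congr rfl fun s _ => ?_
          rw [onePow_succ]
end Comb

section Decomp
variable (p q : ℕ) (a : ℤ → ℤ → ℂ)

def Mm (i j : ℕ) : ℂ := Hmat p q a i j
def Mm1 (i j : ℕ) : ℂ := Hmat p q a (i+1) (j+1)

lemma Hband_hi (i j : ℕ) (h : i + q < j) : Hmat p q a i j = 0 := by
  rw [Hmat, if_neg]; rintro ⟨-, h2⟩; omega
lemma Hband_lo (i j : ℕ) (h : j + p < i) : Hmat p q a i j = 0 := by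
  rw [Hmat, if_neg]; rintro ⟨h2, -⟩; omega

/-- weight of first-passage-to-0 paths. -/
def Fc (m i : ℕ) : ℂ := ∑ s ∈ range p, onePow (Mm1 p q a) q m i s * Hmat p q a (s+1) 0
/-- weight of paths from 0 staying positive after the first step. -/
def Gc (m j : ℕ) : ℂ := ∑ r ∈ range q, Hmat p q a 0 (r+1) * onePow (Mm1 p q a) q m r j

lemma D1 : ∀ n i j, onePow (Mm p q a) q n (i+1) j =
    (if 1 ≤ j then onePow (Mm1 p q a) q n i (j-1) else 0) +
      ∑ m ∈ range n, Fc p q a m i * onePow (Mm p q a) q (n-1-m) 0 j := by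
  intro n
  induction n with
  | zero =>
    intro i j
    simp only [range_zero, Finset.sum_empty, add_zero, onePow_zero]
    rcases Nat.eq_zero_or_pos j with h | h
    · subst h; simp
    · have h1 : 1 ≤ j := h
      rw [if_pos h1]
      by_cases hij : i + 1 = j
      · rw [if_pos hij, if_pos (by omega)]
      · rw [if_neg hij, if_neg (by omega)]
  | succ n ih =>
    intro i j
    have hr : i + 1 + q + 1 = (i + q + 1) + 1 := by omega
    rw [onePow_succ, hr, Finset.sum_range_succ']
    have e1 : ∀ s ∈ range (i + q + 1), Mm p q a (i+1) (s+1) * onePow (Mm p q a) q n (s+1) j =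
        Mm1 p q a i s * ((if 1 ≤ j then onePow (Mm1 p q a) q n s (j-1) else 0) +
          ∑ m ∈ range n, Fc p q a m s * onePow (Mm p q a) q (n-1-m) 0 j) := by
      intro s _
      rw [ih s j]; rfl
    rw [Finset.sum_congr rfl e1]
    simp only [mul_add, Finset.sum_add_distrib]
    have e2 : (∑ s ∈ range (i + q + 1), Mm1 p q a i s * (if 1 ≤ j then onePow (Mm1 p q a) q n s (j-1) else 0)) =
        (if 1 ≤ j then onePow (Mm1 p q a) q (n+1) i (j-1) else 0) := by
      by_cases h : 1 ≤ j
      · simp only [if_pos h]; rw [onePow_succ]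
      · simp only [if_neg h, mul_zero, Finset.sum_const_zero]
    have e3 : (∑ s ∈ range (i + q + 1), Mm1 p q a i s *
          ∑ m ∈ range n, Fc p q a m s * onePow (Mm p q a) q (n-1-m) 0 j) =
        ∑ m ∈ range n, Fc p q a (m+1) i * onePow (Mm p q a) q (n-1-m) 0 j := by
      calc _ = ∑ s ∈ range (i + q + 1), ∑ m ∈ range n,
            Mm1 p q a i s * (Fc p q a m s * onePow (Mm p q a) q (n-1-m) 0 j) := by
            refine Finset.sum_congr rfl fun s _ => ?_; rw [Finset.mul_sum]
        _ = ∑ m ∈ range n, (∑ s ∈ range (i + q + 1), Mm1 p q a i s * Fc p q a m s) *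
              onePow (Mm p q a) q (n-1-m) 0 j := by
            rw [Finset.sum_comm]
            refine Finset.sum_congr rfl fun m _ => ?_
            rw [Finset.sum_mul]
            refine Finset.sum_congr rfl fun s _ => ?_; ring
        _ = _ := by
            refine Finset.sum_congr rfl fun m _ => ?_
            congr 1
            calc ∑ s ∈ range (i + q + 1), Mm1 p q a i s * Fc p q a m s
                = ∑ s' ∈ range p, (∑ s ∈ range (i + q + 1), Mm1 p q a i s * onePow (Mm1 p q a) q m s s') *
                    Hmat p q a (s'+1) 0 := by
                  have ee : ∀ s ∈ range (i + q + 1), Mm1 p q a i s * Fc p q a m s =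
                      ∑ s' ∈ range p, Mm1 p q a i s * (onePow (Mm1 p q a) q m s s' * Hmat p q a (s'+1) 0) := by
                    intro s _
                    rw [Fc, Finset.mul_sum]
                  rw [Finset.sum_congr rfl ee, Finset.sum_comm]
                  refine Finset.sum_congr rfl fun s' _ => ?_
                  rw [Finset.sum_mul]
                  refine Finset.sum_congr rfl fun s _ => ?_
                  ring
              _ = Fc p q a (m+1) i := by
                  rw [Fc]
                  refine Finset.sum_congr rfl fun s' _ => ?_
                  rw [onePow_succ]
    have e4 : Mm p q a (i+1) 0 * onePow (Mm p q a) q n 0 j =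
        Fc p q a 0 i * onePow (Mm p q a) q (n-0) 0 j := by
      have : Fc p q a 0 i = Mm p q a (i+1) 0 := by
        rw [Fc]
        simp only [onePow_zero, ite_mul, one_mul, zero_mul]
        rw [Finset.sum_ite_eq (range p) i (fun s => Hmat p q a (s+1) 0)]
        simp only [Finset.mem_range]
        by_cases h : i < p
        · rw [if_pos h]; rfl
        · rw [if_neg h, Mm, Hband_lo p q a _ 0 (by omega)]
      rw [this, Nat.sub_zero]
    rw [e2, e3, e4]
    have hs : ∑ m ∈ range (n+1), Fc p q a m i * onePow (Mm p q a) q (n + 1 - 1 - m) 0 j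
        = ∑ x ∈ range n, Fc p q a (x+1) i * onePow (Mm p q a) q (n - 1 - x) 0 j +
          Fc p q a 0 i * onePow (Mm p q a) q (n - 0) 0 j := by
      rw [Finset.sum_range_succ']
      congr 1
      · exact Finset.sum_congr rfl fun x _ =>
          congrArg (fun t => Fc p q a (x+1) i * onePow (Mm p q a) q t 0 j) (by omega)
    rw [hs, add_assoc]
end Decomp

section Decomp2
variable (p q : ℕ) (a : ℤ → ℤ → ℂ)

lemma Mm_hi : ∀ i j, i + q < j → Mm p q a i j = 0 := fun i j h => Hband_hi p q a i j h
lemma Mm_lo : ∀ i j, j + p < i → Mm p q a i j = 0 := fun i j h => Hband_lo p q a i j h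
lemma Mm1_hi : ∀ i j, i + q < j → Mm1 p q a i j = 0 := fun i j h => Hband_hi p q a (i+1) (j+1) (by omega)
lemma Mm1_lo : ∀ i j, j + p < i → Mm1 p q a i j = 0 := fun i j h => Hband_lo p q a (i+1) (j+1) (by omega)

lemma D2 : ∀ n i j, onePow (Mm p q a) q n i (j+1) =
    (if 1 ≤ i then onePow (Mm1 p q a) q n (i-1) j else 0) +
      ∑ m ∈ range n, onePow (Mm p q a) q (n-1-m) i 0 * Gc p q a m j := by
  intro n
  induction n with
  | zero =>
    intro i j
    simp only [range_zero, Finset.sum_empty, add_zero, onePow_zero]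
    rcases Nat.eq_zero_or_pos i with h | h
    · subst h; simp
    · have h1 : 1 ≤ i := h
      rw [if_pos h1]
      by_cases hij : i = j + 1
      · rw [if_pos hij, if_pos (by omega)]
      · rw [if_neg hij, if_neg (by omega)]
  | succ n ih =>
    intro i j
    have hr : j + 1 + p + 1 = (j + p + 1) + 1 := by omega
    rw [onePow_right p q (Mm p q a) (Mm_hi p q a) (Mm_lo p q a) n i (j+1), hr,
        Finset.sum_range_succ']
    have e1 : ∀ s ∈ range (j + p + 1), onePow (Mm p q a) q n i (s+1) * Mm p q a (s+1) (j+1) =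
        ((if 1 ≤ i then onePow (Mm1 p q a) q n (i-1) s else 0) +
          ∑ m ∈ range n, onePow (Mm p q a) q (n-1-m) i 0 * Gc p q a m s) * Mm1 p q a s j := by
      intro s _
      rw [ih i s]; rfl
    rw [Finset.sum_congr rfl e1]
    simp only [add_mul, Finset.sum_add_distrib]
    have e2 : (∑ s ∈ range (j + p + 1), (if 1 ≤ i then onePow (Mm1 p q a) q n (i-1) s else 0) * Mm1 p q a s j) =
        (if 1 ≤ i then onePow (Mm1 p q a) q (n+1) (i-1) j else 0) := by
      by_cases h : 1 ≤ i
      · simp only [if_pos h]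
        rw [onePow_right p q (Mm1 p q a) (Mm1_hi p q a) (Mm1_lo p q a) n (i-1) j]
      · simp only [if_neg h, zero_mul, Finset.sum_const_zero]
    have e3 : (∑ s ∈ range (j + p + 1),
          (∑ m ∈ range n, onePow (Mm p q a) q (n-1-m) i 0 * Gc p q a m s) * Mm1 p q a s j) =
        ∑ m ∈ range n, onePow (Mm p q a) q (n-1-m) i 0 * Gc p q a (m+1) j := by
      calc _ = ∑ s ∈ range (j + p + 1), ∑ m ∈ range n,
            onePow (Mm p q a) q (n-1-m) i 0 * (Gc p q a m s * Mm1 p q a s j) := by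
            refine Finset.sum_congr rfl fun s _ => ?_
            rw [Finset.sum_mul]
            refine Finset.sum_congr rfl fun m _ => ?_
            ring
        _ = ∑ m ∈ range n, onePow (Mm p q a) q (n-1-m) i 0 *
              (∑ s ∈ range (j + p + 1), Gc p q a m s * Mm1 p q a s j) := by
            rw [Finset.sum_comm]
            refine Finset.sum_congr rfl fun m _ => ?_
            rw [Finset.mul_sum]
        _ = _ := by
            refine Finset.sum_congr rfl fun m _ => ?_
            congr 1
            calc ∑ s ∈ range (j + p + 1), Gc p q a m s * Mm1 p q a s j
                = ∑ r ∈ range q, Hmat p q a 0 (r+1) *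
                    (∑ s ∈ range (j + p + 1), onePow (Mm1 p q a) q m r s * Mm1 p q a s j) := by
                  have ee : ∀ s ∈ range (j + p + 1), Gc p q a m s * Mm1 p q a s j =
                      ∑ r ∈ range q, Hmat p q a 0 (r+1) * (onePow (Mm1 p q a) q m r s * Mm1 p q a s j) := by
                    intro s _
                    rw [Gc, Finset.sum_mul]
                    refine Finset.sum_congr rfl fun r _ => ?_
                    ring
                  rw [Finset.sum_congr rfl ee, Finset.sum_comm]
                  refine Finset.sum_congr rfl fun r _ => ?_
                  rw [Finset.mul_sum]
              _ = Gc p q a (m+1) j := by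
                  rw [Gc]
                  refine Finset.sum_congr rfl fun r _ => ?_
                  rw [onePow_right p q (Mm1 p q a) (Mm1_hi p q a) (Mm1_lo p q a) m r j]
    have e4 : onePow (Mm p q a) q n i 0 * Mm p q a 0 (j+1) =
        onePow (Mm p q a) q (n-0) i 0 * Gc p q a 0 j := by
      have : Gc p q a 0 j = Mm p q a 0 (j+1) := by
        rw [Gc]
        simp only [onePow_zero, mul_ite, mul_one, mul_zero]
        rw [Finset.sum_ite_eq' (range q) j (fun r => Hmat p q a 0 (r+1))]
        simp only [Finset.mem_range]
        by_cases h : j < q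
        · rw [if_pos h]; rfl
        · rw [if_neg h, Mm, Hband_hi p q a 0 _ (by omega)]
      rw [this, Nat.sub_zero]
    rw [e2, e3, e4]
    have hs : ∑ m ∈ range (n+1), onePow (Mm p q a) q (n + 1 - 1 - m) i 0 * Gc p q a m j
        = ∑ x ∈ range n, onePow (Mm p q a) q (n - 1 - x) i 0 * Gc p q a (x+1) j +
          onePow (Mm p q a) q (n - 0) i 0 * Gc p q a 0 j := by
      rw [Finset.sum_range_succ']
      congr 1
      · exact Finset.sum_congr rfl fun x _ =>
          congrArg (fun t => onePow (Mm p q a) q t i 0 * Gc p q a (x+1) j) (by omega)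
    rw [hs, add_assoc]
end Decomp2


section Series
variable (p q : ℕ) (a : ℤ → ℤ → ℂ)

lemma gen_sum {α : Type*} (t : Finset α) (f : α → ℕ → ℂ) :
    gen (fun n => ∑ s ∈ t, f s n) = ∑ s ∈ t, gen (f s) := by
  classical
  induction t using Finset.induction with
  | empty => simpa using gen_zero
  | insert x t0 hnotmem ih =>
    rw [Finset.sum_insert hnotmem, ← ih, ← gen_add]
    congr 1
    funext n
    rw [Finset.sum_insert hnotmem]

lemma gen_mul_CLS (c : ℕ → ℂ) (k : ℂ) : gen c * CLS k = gen (fun n => c n * k) := by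
  rw [mul_comm, CLS_mul_gen]
  congr 1; funext n; ring

def phiS (i j : ℕ) : LS := gen fun n => onePow (Mm p q a) q n i j
def phiS1 (i j : ℕ) : LS := gen fun n => onePow (Mm1 p q a) q n i j
def Cse (i : ℕ) : LS := gen fun m => Fc p q a m i
def Bse (j : ℕ) : LS := gen fun m => Gc p q a m j

lemma Cse_eq (i : ℕ) : Cse p q a i = ∑ s ∈ range p, phiS1 p q a i s * CLS (Hmat p q a (s+1) 0) := by
  rw [Cse]
  have : (fun m => Fc p q a m i) = fun m => ∑ s ∈ range p, onePow (Mm1 p q a) q m i s * Hmat p q a (s+1) 0 := by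
    funext m; rw [Fc]
  rw [this, gen_sum]
  exact Finset.sum_congr rfl fun s _ => (gen_mul_CLS _ _).symm

lemma Bse_eq (j : ℕ) : Bse p q a j = ∑ r ∈ range q, CLS (Hmat p q a 0 (r+1)) * phiS1 p q a r j := by
  rw [Bse]
  have : (fun m => Gc p q a m j) = fun m => ∑ r ∈ range q, Hmat p q a 0 (r+1) * onePow (Mm1 p q a) q m r j := by
    funext m; rw [Gc]
  rw [this, gen_sum]
  exact Finset.sum_congr rfl fun r _ => by rw [phiS1, CLS_mul_gen]

lemma SD1 (i j : ℕ) : phiS p q a (i+1) j =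
    (if 1 ≤ j then phiS1 p q a i (j-1) else 0) + Cse p q a i * phiS p q a 0 j := by
  unfold phiS Cse phiS1
  rw [gen_mul]
  have h1 : (fun n => onePow (Mm p q a) q n (i+1) j) =
      fun n => (if 1 ≤ j then onePow (Mm1 p q a) q n i (j-1) else 0) +
        ∑ m ∈ range n, Fc p q a m i * onePow (Mm p q a) q (n-1-m) 0 j := by
    funext n; exact D1 p q a n i j
  rw [h1, gen_add]
  congr 1
  by_cases h : 1 ≤ j
  · simp only [if_pos h]
  · simp only [if_neg h]; exact gen_zero

lemma SD2 (i j : ℕ) : phiS p q a i (j+1) =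
    (if 1 ≤ i then phiS1 p q a (i-1) j else 0) + Bse p q a j * phiS p q a i 0 := by
  unfold phiS Bse phiS1
  rw [gen_mul]
  have h1 : (fun n => onePow (Mm p q a) q n i (j+1)) =
      fun n => (if 1 ≤ i then onePow (Mm1 p q a) q n (i-1) j else 0) +
        ∑ m ∈ range n, Gc p q a m j * onePow (Mm p q a) q (n-1-m) i 0 := by
    funext n
    rw [D2 p q a n i j]
    congr 1
    exact Finset.sum_congr rfl fun m _ => mul_comm _ _
  rw [h1, gen_add]
  congr 1
  by_cases h : 1 ≤ i
  · simp only [if_pos h]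
  · simp only [if_neg h]; exact gen_zero

lemma phiS_ne_zero : phiS p q a 0 0 ≠ 0 := by
  intro h
  have h2 : gen (fun n => onePow (Mm p q a) q n 0 0) = gen (fun _ => 0) := by
    rw [gen_zero]; exact h
  have := gen_inj h2 0
  simp [onePow_zero] at this

lemma K1 (r : ℕ) : phiS p q a (r+1) 0 = Cse p q a r * phiS p q a 0 0 := by
  have := SD1 p q a r 0
  simpa using this

lemma K2 (j : ℕ) : phiS p q a 0 (j+1) = Bse p q a j * phiS p q a 0 0 := by
  have := SD2 p q a 0 j
  simpa using this

lemma K3 (i j : ℕ) : phiS p q a (i+1) (j+1) =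
    phiS1 p q a i j + Cse p q a i * phiS p q a 0 (j+1) := by
  have h := SD1 p q a i (j+1)
  simpa using h

lemma K4 : (zLS - CLS (Hmat p q a 0 0) -
      ∑ r ∈ range q, CLS (Hmat p q a 0 (r+1)) * Cse p q a r) * phiS p q a 0 0 = 1 := by
  have S1 : zLS * phiS p q a 0 0 = 1 +
      (∑ r ∈ range q, CLS (Hmat p q a 0 (r+1)) * (Cse p q a r * phiS p q a 0 0) +
        CLS (Hmat p q a 0 0) * phiS p q a 0 0) := by
    rw [phiS, zLS_mul_gen]
    have h0 : onePow (Mm p q a) q 0 0 0 = 1 := by simp [onePow_zero]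
    rw [h0]
    have hC1 : CLS (1:ℂ) = 1 := map_one HahnSeries.C
    rw [hC1]
    congr 1
    have h1 : (fun n => onePow (Mm p q a) q (n+1) 0 0) =
        fun n => ∑ r ∈ range (0 + q + 1), Mm p q a 0 r * onePow (Mm p q a) q n r 0 := by
      funext n; rw [onePow_succ]
    rw [h1, gen_sum]
    have h2 : ∀ r ∈ range (0 + q + 1),
        gen (fun n => Mm p q a 0 r * onePow (Mm p q a) q n r 0) =
          CLS (Mm p q a 0 r) * phiS p q a r 0 := by
      intro r _
      rw [phiS, CLS_mul_gen]
    rw [Finset.sum_congr rfl h2]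
    have h3 : 0 + q + 1 = q + 1 := by omega
    rw [h3, Finset.sum_range_succ']
    congr 1
    refine Finset.sum_congr rfl fun r _ => ?_
    rw [K1 p q a r]
    rfl
  have hsum : (∑ r ∈ range q, CLS (Hmat p q a 0 (r+1)) * Cse p q a r) * phiS p q a 0 0 =
      ∑ r ∈ range q, CLS (Hmat p q a 0 (r+1)) * (Cse p q a r * phiS p q a 0 0) := by
    rw [Finset.sum_mul]
    exact Finset.sum_congr rfl fun r _ => by ring
  rw [sub_mul, sub_mul, hsum]
  linear_combination S1
end Series

section Assembly
variable (p q : ℕ) (a : ℤ → ℤ → ℂ)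

lemma Hmat00 : Hmat p q a 0 0 = a 0 0 := by
  rw [Hmat, if_pos] <;> simp

lemma Hrow (k : ℕ) (hk : k < q) : Hmat p q a 0 (k+1) = a ((k:ℤ)+1) 0 := by
  rw [Hmat, if_pos]
  · congr 1 <;> push_cast <;> omega
  · constructor <;> push_cast <;> omega

lemma Hcol (s : ℕ) (hs : s < p) : Hmat p q a (s+1) 0 = a (-((s:ℤ)+1)) 0 := by
  rw [Hmat, if_pos]
  · congr 1 <;> push_cast <;> omega
  · constructor <;> push_cast <;> omega

lemma Fmat0_apply (i : Fin q) (j : Fin p) : Fmat p q a 0 i j = phiS p q a (i:ℕ) (j:ℕ) := rfl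

lemma Fmat1_apply (i : Fin q) (j : Fin p) : Fmat p q a 1 i j = phiS1 p q a (i:ℕ) (j:ℕ) := rfl

lemma FMa_last (hp : 0 < p) (k : Fin q) (j : Fin p) (hj : (j:ℕ) = p - 1) :
    (Fmat p q a 1 * alphaM p a 0) k j = Cse p q a (k:ℕ) := by
  rw [Matrix.mul_apply]
  have h1 : ∀ l : Fin p, Fmat p q a 1 k l * alphaM p a 0 l j =
      phiS1 p q a (k:ℕ) (l:ℕ) * CLS (Hmat p q a ((l:ℕ)+1) 0) := by
    intro l
    rw [Fmat1_apply, alphaM, if_pos hj, Hcol p q a (l:ℕ) l.isLt]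
    norm_num
  rw [Finset.sum_congr rfl fun l _ => h1 l, Cse_eq]
  exact Fin.sum_univ_eq_sum_range (fun l => phiS1 p q a (k:ℕ) l * CLS (Hmat p q a (l+1) 0)) p

lemma FMa_mid (k : Fin q) (j : Fin p) (hj : (j:ℕ) ≠ p - 1) :
    (Fmat p q a 1 * alphaM p a 0) k j = phiS1 p q a (k:ℕ) (j:ℕ) := by
  rw [Matrix.mul_apply]
  have h1 : ∀ l : Fin p, Fmat p q a 1 k l * alphaM p a 0 l j =
      if l = j then phiS1 p q a (k:ℕ) (l:ℕ) else 0 := by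
    intro l
    rw [Fmat1_apply, alphaM, if_neg hj]
    by_cases h : l = j
    · rw [if_pos h, if_pos h, mul_one]
    · rw [if_neg h, if_neg h, mul_zero]
  rw [Finset.sum_congr rfl fun l _ => h1 l, Finset.sum_ite_eq' Finset.univ j
    (fun l => phiS1 p q a (k:ℕ) (l:ℕ)), if_pos (Finset.mem_univ j)]

lemma Psum_mid (i : Fin q) (hi : (i:ℕ) ≠ q - 1) (v : Fin q → LS) :
    ∑ k : Fin q, alphaP q a 0 i k * v k = v i := by
  have h1 : ∀ k : Fin q, alphaP q a 0 i k * v k = if i = k then v k else 0 := by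
    intro k
    rw [alphaP, if_neg hi]
    by_cases h : i = k
    · rw [if_pos h, if_pos h, one_mul]
    · rw [if_neg h, if_neg h, zero_mul]
  rw [Finset.sum_congr rfl fun k _ => h1 k,
    Finset.sum_ite_eq Finset.univ i v, if_pos (Finset.mem_univ i)]

lemma Psum_last (i : Fin q) (hi : (i:ℕ) = q - 1) (v : ℕ → LS) :
    ∑ k : Fin q, alphaP q a 0 i k * v (k:ℕ) =
      -∑ r ∈ range q, CLS (Hmat p q a 0 (r+1)) * v r := by
  have h1 : ∀ k : Fin q, alphaP q a 0 i k * v (k:ℕ) =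
      -(CLS (Hmat p q a 0 ((k:ℕ)+1)) * v (k:ℕ)) := by
    intro k
    rw [alphaP, if_pos hi]
    simp only [Nat.cast_zero]
    rw [Hrow p q a (k:ℕ) k.isLt]
    ring
  rw [Finset.sum_congr rfl fun k _ => h1 k, Finset.sum_neg_distrib]
  congr 1
  exact Fin.sum_univ_eq_sum_range (fun r => CLS (Hmat p q a 0 (r+1)) * v r) q
end Assembly

lemma Fmat0_apply' (p q : ℕ) (a : ℤ → ℤ → ℂ) (x y : ℕ) (hx : x < q) (hy : y < p) :
    Fmat p q a 0 ⟨x, hx⟩ ⟨y, hy⟩ = phiS p q a x y := rfl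

/-- **Theorem 6.1**: `φ_{0,0}(z) ≠ 0` and `T(F(z)) = α_0(z) + α_0⁺ F_1(z) α_0⁻`,
i.e. `F(z) = 𝟏/(α_0(z) + α_0⁺ F_1(z) α_0⁻)`. -/
theorem T_of_F_eq_alpha
    (p q : ℕ) (hp : 0 < p) (hq : 0 < q) (a : ℤ → ℤ → ℂ) :
    Fmat p q a 0 ⟨0, hq⟩ ⟨0, hp⟩ ≠ 0 ∧
    Tmat hq hp (Fmat p q a 0) =
      alphaZ q p a 0 + alphaP q a 0 * Fmat p q a 1 * alphaM p a 0 := by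
  have hg : phiS p q a 0 0 ≠ 0 := phiS_ne_zero p q a
  constructor
  · exact hg
  refine Matrix.ext fun i j => ?_
  rw [Matrix.add_apply, Matrix.mul_assoc, Matrix.mul_apply]
  simp only [Tmat]
  by_cases hi : (i:ℕ) + 1 < q
  · have hi' : (i:ℕ) ≠ q - 1 := by omega
    rw [dif_pos hi]
    by_cases hj : (j:ℕ) + 1 < p
    · have hj' : (j:ℕ) ≠ p - 1 := by omega
      rw [dif_pos hj, alphaZ, if_neg (by rintro ⟨h1, h2⟩; omega)]
      rw [Finset.sum_congr rfl fun k (_ : k ∈ Finset.univ) => by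
        rw [FMa_mid p q a k j hj'], Psum_mid q a i hi'
          (fun k => phiS1 p q a (k:ℕ) (j:ℕ)), zero_add]
      rw [Fmat0_apply', Fmat0_apply', Fmat0_apply', Fmat0_apply', div_eq_iff hg]
      linear_combination phiS p q a 0 0 * K3 p q a (i:ℕ) (j:ℕ) -
        phiS p q a 0 ((j:ℕ)+1) * K1 p q a (i:ℕ)
    · have hj' : (j:ℕ) = p - 1 := by have := j.isLt; omega
      rw [dif_neg hj, alphaZ, if_neg (by rintro ⟨h1, h2⟩; omega)]
      rw [Finset.sum_congr rfl fun k (_ : k ∈ Finset.univ) => by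
        rw [FMa_last p q a hp k j hj'], Psum_mid q a i hi'
          (fun k => Cse p q a (k:ℕ)), zero_add]
      rw [Fmat0_apply', Fmat0_apply', div_eq_iff hg]
      exact K1 p q a (i:ℕ)
  · have hi' : (i:ℕ) = q - 1 := by have := i.isLt; omega
    rw [dif_neg hi]
    by_cases hj : (j:ℕ) + 1 < p
    · have hj' : (j:ℕ) ≠ p - 1 := by omega
      rw [dif_pos hj, alphaZ, if_neg (by rintro ⟨h1, h2⟩; omega)]
      rw [Finset.sum_congr rfl fun k (_ : k ∈ Finset.univ) => by
        rw [FMa_mid p q a k j hj'], Psum_last p q a i hi'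
          (fun r => phiS1 p q a r (j:ℕ)), ← Bse_eq, zero_add]
      rw [Fmat0_apply', Fmat0_apply', div_eq_iff hg]
      linear_combination -K2 p q a (j:ℕ)
    · have hj' : (j:ℕ) = p - 1 := by have := j.isLt; omega
      rw [dif_neg hj, alphaZ, if_pos ⟨hi', hj'⟩]
      rw [Finset.sum_congr rfl fun k (_ : k ∈ Finset.univ) => by
        rw [FMa_last p q a hp k j hj'], Psum_last p q a i hi' (fun r => Cse p q a r)]
      rw [Fmat0_apply', div_eq_iff hg]
      simp only [Nat.cast_zero]
      rw [← Hmat00 p q a]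
      linear_combination -K4 p q a
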